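/- arXiv:1807.10549 — 2 statements merged into one kernel-verified Lean document; each statement's English description precedes it below -/
import Mathlib

section
/- The Malthusian parameter λ is not differentiable at any point of the diagonal ℋ: for x = (x_b,x_d) ∈ 𝒱 with x_b = x_d, the function t ↦ λ(x_b + t, x_d) has right derivative 0 at t = 0 and left derivative e^{-λ(x) x_b} / G(x) > 0 at t = 0; hence λ is not differentiable at x. -/
open MeasureTheory Set Filter

noncomputable section

/-- The viable set `𝒱 = {(x_b, x_d) : min(x_b, x_d) > 1}`. -/
def viable : Set (ℝ × ℝ) := {x : ℝ × ℝ | 1 < min x.1 x.2}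

/-- `lam` is a Malthusian parameter function on `𝒱`. -/
def IsMalthusian (lam : ℝ × ℝ → ℝ) : Prop :=
  ∀ x ∈ viable, 0 < lam x ∧ (∫ a in (0:ℝ)..(min x.1 x.2), Real.exp (-(lam x) * a)) = 1

/-- The mean generation time `G(x) = ∫₀^{min(x_b,x_d)} a e^{-λ(x) a} da`. -/
def genTime (lam : ℝ × ℝ → ℝ) (x : ℝ × ℝ) : ℝ :=
  ∫ a in (0:ℝ)..(min x.1 x.2), a * Real.exp (-(lam x) * a)

def phi (l : ℝ) : ℝ := -Real.log (1 - l) / l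

lemma integral_exp_neg_mul (l m : ℝ) (hl : l ≠ 0) :
    (∫ a in (0:ℝ)..m, Real.exp (-l * a)) = (1 - Real.exp (-l * m)) / l := by
  have key : ∀ a ∈ Set.uIcc (0:ℝ) m,
      HasDerivAt (fun b => -Real.exp (-l * b) / l) (Real.exp (-l * a)) a := by
    intro a _
    have h1 : HasDerivAt (fun b : ℝ => -l * b) (-l) a := by
      simpa using (hasDerivAt_id a).const_mul (-l)
    have h3 := (h1.exp.neg).div_const l
    refine h3.congr_deriv ?_
    field_simp
  have hint : IntervalIntegrable (fun a => Real.exp (-l * a)) volume 0 m :=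
    Continuous.intervalIntegrable (by continuity) 0 m
  rw [intervalIntegral.integral_eq_sub_of_hasDerivAt key hint]
  simp [mul_zero]
  ring

lemma integral_id_mul_exp (l m : ℝ) (hl : l ≠ 0) :
    (∫ a in (0:ℝ)..m, a * Real.exp (-l * a))
      = 1 / l ^ 2 - (m / l + 1 / l ^ 2) * Real.exp (-l * m) := by
  have key : ∀ a ∈ Set.uIcc (0:ℝ) m,
      HasDerivAt (fun b => -((b / l + 1 / l ^ 2) * Real.exp (-l * b)))
        (a * Real.exp (-l * a)) a := by
    intro a _
    have h1 : HasDerivAt (fun b : ℝ => -l * b) (-l) a := by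
      simpa using (hasDerivAt_id a).const_mul (-l)
    have hu : HasDerivAt (fun b : ℝ => b / l + 1 / l ^ 2) (1 / l) a := by
      exact ((hasDerivAt_id a).div_const l).add_const (1 / l ^ 2)
    have h3 := (hu.mul h1.exp).neg
    refine h3.congr_deriv ?_
    field_simp
    ring
  have hint : IntervalIntegrable (fun a : ℝ => a * Real.exp (-l * a)) volume 0 m :=
    Continuous.intervalIntegrable (by continuity) 0 m
  rw [intervalIntegral.integral_eq_sub_of_hasDerivAt key hint]
  simp [mul_zero]
  ring

lemma malthus_props (lam : ℝ × ℝ → ℝ) (hlam : IsMalthusian lam) {y : ℝ × ℝ}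
    (hy : y ∈ viable) :
    lam y ∈ Set.Ioo (0:ℝ) 1 ∧ Real.exp (-(lam y) * min y.1 y.2) = 1 - lam y ∧
      phi (lam y) = min y.1 y.2 := by
  obtain ⟨hpos, hint⟩ := hlam y hy
  set l := lam y with hldef
  set m := min y.1 y.2 with hmdef
  have hl : l ≠ 0 := ne_of_gt hpos
  rw [integral_exp_neg_mul l m hl] at hint
  have hexp : Real.exp (-l * m) = 1 - l := by
    field_simp at hint
    rw [neg_mul] at *
    linarith
  have hl1 : l < 1 := by nlinarith [Real.exp_pos (-l * m)]
  refine ⟨⟨hpos, hl1⟩, hexp, ?_⟩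
  have hlog : -l * m = Real.log (1 - l) := by rw [← hexp, Real.log_exp]
  unfold phi
  rw [← hlog]
  field_simp

lemma phi_hasDerivAt {l : ℝ} (hl : l ∈ Set.Ioo (0:ℝ) 1) :
    HasDerivAt phi ((l / (1 - l) + Real.log (1 - l)) / l ^ 2) l := by
  have h1 : (1:ℝ) - l ≠ 0 := by nlinarith [hl.2]
  have hlog : HasDerivAt (fun t : ℝ => -Real.log (1 - t)) (1 / (1 - l)) l := by
    have hinner : HasDerivAt (fun t : ℝ => 1 - t) (-1) l := by
      simpa using (hasDerivAt_id l).const_sub 1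
    have h := ((Real.hasDerivAt_log h1).comp l hinner).neg
    refine h.congr_deriv ?_
    field_simp
  have h : HasDerivAt phi ((1 / (1 - l) * l - -Real.log (1 - l) * 1) / l ^ 2) l :=
    hlog.div (hasDerivAt_id l) (ne_of_gt hl.1)
  convert h using 2
  ring

lemma phi_deriv_pos {l : ℝ} (hl : l ∈ Set.Ioo (0:ℝ) 1) :
    0 < (l / (1 - l) + Real.log (1 - l)) / l ^ 2 := by
  have h1 : (0:ℝ) < 1 - l := by nlinarith [hl.2]
  have hlt : Real.log ((1 - l)⁻¹) < (1 - l)⁻¹ - 1 := by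
    apply Real.log_lt_sub_one_of_pos (by positivity)
    intro h
    have : (1:ℝ) - l = 1 := by
      field_simp at h; linarith
    nlinarith [hl.1]
  rw [Real.log_inv] at hlt
  have hnum : 0 < l / (1 - l) + Real.log (1 - l) := by
    have : (1 - l)⁻¹ - 1 = l / (1 - l) := by field_simp; ring
    rw [this] at hlt
    linarith
  have hlp := hl.1
  positivity

lemma phi_strictMonoOn : StrictMonoOn phi (Set.Ioo (0:ℝ) 1) := by
  apply strictMonoOn_of_deriv_pos (convex_Ioo 0 1)
  · intro t ht
    exact ((phi_hasDerivAt ht).continuousAt).continuousWithinAt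
  · intro t ht
    rw [interior_Ioo] at ht
    rw [(phi_hasDerivAt ht).deriv]
    exact phi_deriv_pos ht

/-- On the diagonal `ℋ = {x_b = x_d}` the Malthusian parameter is not differentiable:
the map `t ↦ λ(x_b + t, x_d)` has right derivative `0` and left derivative
`e^{-λ(x) x_b}/G(x) > 0` at `t = 0`, hence `λ` is not differentiable at `x`. -/
theorem malthus_not_differentiable_on_diagonal (lam : ℝ × ℝ → ℝ) (hlam : IsMalthusian lam)
    (x : ℝ × ℝ) (hx : x ∈ viable) (hdiag : x.1 = x.2) :
    HasDerivWithinAt (fun t => lam (x.1 + t, x.2)) 0 (Ici 0) 0 ∧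
    HasDerivWithinAt (fun t => lam (x.1 + t, x.2))
      (Real.exp (-(lam x) * x.1) / genTime lam x) (Iic 0) 0 ∧
    0 < Real.exp (-(lam x) * x.1) / genTime lam x ∧
    ¬ DifferentiableAt ℝ lam x := by
  have hmin₀ : min x.1 x.2 = x.1 := min_eq_left (le_of_eq hdiag)
  have hm : 1 < x.1 := by
    have := hx
    simp only [viable, Set.mem_setOf_eq, hmin₀] at this
    exact this
  have hm2 : 1 < x.2 := hdiag ▸ hm
  obtain ⟨hl₀, hexp₀, hphi₀⟩ := malthus_props lam hlam hx
  rw [hmin₀] at hexp₀ hphi₀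
  have hl₀pos : 0 < lam x := hl₀.1
  have h1l : (0:ℝ) < 1 - lam x := by nlinarith [hl₀.2]
  have hlog₀ : Real.log (1 - lam x) = -(lam x) * x.1 := by rw [← hexp₀, Real.log_exp]
  have hxeq : x = (x.1, x.1) := Prod.ext rfl hdiag.symm
  have hLx : lam (x.1, x.1) = lam x := by rw [← hxeq]
  -- properties of the diagonal restriction
  have hLprops : ∀ s : ℝ, 1 < s → lam (s, s) ∈ Set.Ioo (0:ℝ) 1 ∧ phi (lam (s, s)) = s := by
    intro s hs
    have hv : ((s, s) : ℝ × ℝ) ∈ viable := by simpa [viable] using hs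
    obtain ⟨h1, _, h3⟩ := malthus_props lam hlam hv
    exact ⟨h1, by simpa using h3⟩
  -- Right derivative: the function is constant on `Ici 0`
  have hconst : ∀ t ∈ Ici (0:ℝ), lam (x.1 + t, x.2) = lam x := by
    intro t ht
    have ht' : (0:ℝ) ≤ t := ht
    have hv : ((x.1 + t, x.2) : ℝ × ℝ) ∈ viable := by
      simp only [viable, Set.mem_setOf_eq, lt_min_iff]
      constructor <;> linarith
    obtain ⟨hI, _, hphi⟩ := malthus_props lam hlam hv
    have hminy : min (x.1 + t) x.2 = x.1 := by
      rw [← hdiag]; exact min_eq_right (by linarith)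
    apply phi_strictMonoOn.injOn hI hl₀
    rw [hphi, hphi₀, hminy]
  have hright : HasDerivWithinAt (fun t => lam (x.1 + t, x.2)) 0 (Ici 0) 0 :=
    (hasDerivWithinAt_const 0 (Ici 0) (lam x)).congr hconst (by simpa using hconst 0 le_rfl)
  -- generation time computations
  have hG : genTime lam x = (1 - x.1 * (1 - lam x)) / lam x := by
    unfold genTime
    rw [hmin₀, integral_id_mul_exp _ _ (ne_of_gt hl₀pos), hexp₀]
    field_simp
    ring
  have hGpos : 0 < genTime lam x := by
    unfold genTime
    apply intervalIntegral.intervalIntegral_pos_of_pos_on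
    · exact Continuous.intervalIntegrable (by fun_prop) _ _
    · intro a ha; exact mul_pos ha.1 (Real.exp_pos _)
    · rw [hmin₀]; linarith
  have hkeypos : 0 < 1 - x.1 * (1 - lam x) := by
    have : 1 - x.1 * (1 - lam x) = lam x * genTime lam x := by
      rw [hG]; field_simp
    rw [this]; exact mul_pos hl₀pos hGpos
  set d : ℝ := (lam x / (1 - lam x) + Real.log (1 - lam x)) / (lam x) ^ 2 with hddef
  have hd : d = (1 - x.1 * (1 - lam x)) / (lam x * (1 - lam x)) := by
    rw [hddef, hlog₀]
    field_simp
    ring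
  have hd0 : d ≠ 0 := by
    rw [hd]; exact ne_of_gt (div_pos hkeypos (mul_pos hl₀pos h1l))
  have hdinv : d⁻¹ = Real.exp (-(lam x) * x.1) / genTime lam x := by
    rw [hd, hexp₀, hG, inv_div]
    rw [div_eq_div_iff (ne_of_gt hkeypos) (by positivity)]
    field_simp
  -- continuity of the diagonal restriction at x.1
  have hcont : ContinuousAt (fun s => lam (s, s)) x.1 := by
    rw [Metric.continuousAt_iff]
    intro ε hε
    set ε' : ℝ := min ε (min (lam x / 2) ((1 - lam x) / 2)) with hε'def
    have hε'pos : 0 < ε' := by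
      apply lt_min hε (lt_min (by linarith) (by linarith))
    have hε'le : ε' ≤ ε := min_le_left _ _
    have hε'1 : ε' ≤ lam x / 2 := le_trans (min_le_right _ _) (min_le_left _ _)
    have hε'2 : ε' ≤ (1 - lam x) / 2 := le_trans (min_le_right _ _) (min_le_right _ _)
    have hmem1 : lam x - ε' ∈ Set.Ioo (0:ℝ) 1 := ⟨by linarith, by linarith⟩
    have hmem2 : lam x + ε' ∈ Set.Ioo (0:ℝ) 1 := ⟨by linarith, by linarith⟩
    have hlt1 : phi (lam x - ε') < x.1 := by
      rw [← hphi₀]; exact phi_strictMonoOn hmem1 hl₀ (by linarith)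
    have hlt2 : x.1 < phi (lam x + ε') := by
      rw [← hphi₀]; exact phi_strictMonoOn hl₀ hmem2 (by linarith)
    refine ⟨min (min (phi (lam x + ε') - x.1) (x.1 - phi (lam x - ε'))) (x.1 - 1),
      lt_min (lt_min (by linarith) (by linarith)) (by linarith), ?_⟩
    intro s hs
    rw [Real.dist_eq] at hs ⊢
    have habs := abs_lt.mp (lt_of_lt_of_le hs (min_le_left _ _))
    have habs2 := abs_lt.mp (lt_of_lt_of_le hs (min_le_right _ _))
    have hs1 : 1 < s := by linarith [habs2.1]
    obtain ⟨hIos, hphis⟩ := hLprops s hs1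
    rw [hLx]
    have hub : lam (s, s) < lam x + ε' := by
      by_contra h
      push_neg at h
      have := phi_strictMonoOn.monotoneOn hmem2 hIos h
      rw [hphis] at this
      have h1 := min_le_left (phi (lam x + ε') - x.1) (x.1 - phi (lam x - ε'))
      linarith [habs.2]
    have hlb : lam x - ε' < lam (s, s) := by
      by_contra h
      push_neg at h
      have := phi_strictMonoOn.monotoneOn hIos hmem1 h
      rw [hphis] at this
      have h1 := min_le_right (phi (lam x + ε') - x.1) (x.1 - phi (lam x - ε'))
      linarith [habs.1]
    rw [abs_lt]
    constructor <;> nlinarith [hε'le]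
  -- derivative of the diagonal restriction via the inverse function theorem
  have hLd : HasDerivAt (fun s => lam (s, s)) d⁻¹ x.1 := by
    refine HasDerivAt.of_local_left_inverse (f := phi) hcont ?_ hd0 ?_
    · show HasDerivAt phi d (lam (x.1, x.1))
      rw [hLx, hddef]
      exact phi_hasDerivAt hl₀
    · exact (eventually_gt_nhds hm).mono fun s hs => (hLprops s hs).2
  have hinner : HasDerivAt (fun t : ℝ => x.1 + t) 1 0 := by
    simpa using (hasDerivAt_id (0:ℝ)).const_add x.1
  have hLd' : HasDerivAt (fun s => lam (s, s)) d⁻¹ (x.1 + 0) := by rwa [add_zero]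
  have hcomp : HasDerivAt (fun t => lam (x.1 + t, x.1 + t)) d⁻¹ 0 := by
    exact (hLd'.comp 0 hinner).congr_deriv (mul_one _)
  have heq : (fun t => lam (x.1 + t, x.2)) =ᶠ[nhdsWithin 0 (Iic 0)]
      (fun t => lam (x.1 + t, x.1 + t)) := by
    filter_upwards [mem_nhdsWithin_of_mem_nhds (Ioi_mem_nhds (show 1 - x.1 < 0 by linarith)),
      self_mem_nhdsWithin] with t ht hts
    have ht' : 1 - x.1 < t := ht
    have hts' : t ≤ (0:ℝ) := hts
    have h1t : 1 < x.1 + t := by linarith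
    have hv : ((x.1 + t, x.2) : ℝ × ℝ) ∈ viable := by
      simp only [viable, Set.mem_setOf_eq, lt_min_iff]
      constructor <;> linarith
    obtain ⟨hI, _, hphi⟩ := malthus_props lam hlam hv
    obtain ⟨hI2, hphi2⟩ := hLprops (x.1 + t) h1t
    apply phi_strictMonoOn.injOn hI hI2
    rw [hphi, hphi2]
    show min (x.1 + t) x.2 = x.1 + t
    rw [← hdiag]
    exact min_eq_left (by linarith)
  have heq0 : lam (x.1 + 0, x.2) = lam (x.1 + 0, x.1 + 0) := by
    rw [add_zero, ← hdiag]
  have hleft : HasDerivWithinAt (fun t => lam (x.1 + t, x.2))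
      (Real.exp (-(lam x) * x.1) / genTime lam x) (Iic 0) 0 := by
    rw [← hdinv]
    exact (hcomp.hasDerivWithinAt).congr_of_eventuallyEq heq heq0
  have hcpos : 0 < Real.exp (-(lam x) * x.1) / genTime lam x :=
    div_pos (Real.exp_pos _) hGpos
  refine ⟨hright, hleft, hcpos, ?_⟩
  intro hdiff
  have hin2 : HasDerivAt (fun t : ℝ => ((x.1 + t, x.2) : ℝ × ℝ)) ((1:ℝ), (0:ℝ)) 0 :=
    hinner.prodMk (hasDerivAt_const 0 x.2)
  have hfd : HasFDerivAt lam (fderiv ℝ lam x) ((fun t : ℝ => ((x.1 + t, x.2) : ℝ × ℝ)) 0) := by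
    simpa using hdiff.hasFDerivAt
  have hcurve : HasDerivAt (fun t => lam (x.1 + t, x.2)) ((fderiv ℝ lam x) (1, 0)) 0 :=
    hfd.comp_hasDerivAt 0 hin2
  have e1 := (hcurve.hasDerivWithinAt (s := Ici 0)).derivWithin
    (uniqueDiffOn_Ici 0 0 Set.self_mem_Ici)
  have e2 := hright.derivWithin (uniqueDiffOn_Ici 0 0 Set.self_mem_Ici)
  have e3 := (hcurve.hasDerivWithinAt (s := Iic 0)).derivWithin
    (uniqueDiffOn_Iic 0 0 Set.self_mem_Iic)
  have e4 := hleft.derivWithin (uniqueDiffOn_Iic 0 0 Set.self_mem_Iic)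
  rw [e1] at e2
  rw [e3] at e4
  rw [← e4, e2] at hcpos
  exact lt_irrefl 0 hcpos
end
end

section
/- Let x ∈ 𝒱 and η > 0. Consider pairs n = (n¹, n²) of nonnegative, integrable, continuous functions on [0,∞), differentiable at every a > 0 except possibly a ∈ {x_b, x_d}, satisfying, with ρ = ∫₀^∞ (n¹(a) + n²(a)) da: (n¹)′(a) = −(1_{a>x_d} + ηρ) n¹(a) and (n²)′(a) = −(1 + ηρ) n²(a) for a ∉ {x_b, x_d}, together with the boundary conditions n¹(0) = ∫₀^{min(x_b,x_d)} n¹(a) da and n²(0) = ∫₀^∞ 1_{x_d<a≤x_b} n¹(a) da + ∫₀^{x_b} n²(a) da. Then there is exactly one such n that is not identically zero; it satisfies η ρ = λ(x), and it equals (λ(x)/(η ‖N_x‖₁)) N_x, where N_x = (N¹, N²) is given by N¹(a) = e^{−(λ(x)a + max(a−x_d,0))}, N²(a) = (F₂₁/(1−F₂₂)) e^{−(1+λ(x))a} with F₂₁ = ∫₀^∞ 1_{x_d<a≤x_b} e^{−λ(x)a − max(a−x_d,0)} da, F₂₂ = ∫₀^{x_b} e^{−(1+λ(x))a} da, and ‖N_x‖₁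 = ∫₀^∞ (N¹(a)+N²(a)) da. -/
open MeasureTheory Set Filter

noncomputable section

/-- First component of the stable age distribution: `N¹(a) = e^{−(λa + max(a−x_d,0))}`. -/
def N1 (lam : ℝ × ℝ → ℝ) (x : ℝ × ℝ) (a : ℝ) : ℝ :=
  Real.exp (-(lam x * a + max (a - x.2) 0))

/-- `F₂₁ = ∫₀^∞ 1_{x_d < a ≤ x_b} e^{−λa − max(a−x_d,0)} da`. -/
def F21 (lam : ℝ × ℝ → ℝ) (x : ℝ × ℝ) : ℝ :=
  ∫ a in Ioi (0:ℝ),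
    if x.2 < a ∧ a ≤ x.1 then Real.exp (-(lam x) * a - max (a - x.2) 0) else 0

/-- `F₂₂ = ∫₀^{x_b} e^{−(1+λ)a} da`. -/
def F22 (lam : ℝ × ℝ → ℝ) (x : ℝ × ℝ) : ℝ :=
  ∫ a in (0:ℝ)..x.1, Real.exp (-(1 + lam x) * a)

/-- Second component of the stable age distribution:
`N²(a) = (F₂₁/(1−F₂₂)) e^{−(1+λ)a}`. -/
def N2 (lam : ℝ × ℝ → ℝ) (x : ℝ × ℝ) (a : ℝ) : ℝ :=
  (F21 lam x / (1 - F22 lam x)) * Real.exp (-(1 + lam x) * a)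

/-- `‖N_x‖₁ = ∫₀^∞ (N¹(a) + N²(a)) da`. -/
def normN (lam : ℝ × ℝ → ℝ) (x : ℝ × ℝ) : ℝ :=
  ∫ a in Ioi (0:ℝ), (N1 lam x a + N2 lam x a)

/-- `IsStationaryState η x n1 n2` : `(n¹,n²)` is a nonnegative, integrable, continuous pair on
`[0,∞)` satisfying the stationary monomorphic logistic age-structured equations with
competition intensity `η`, with total mass `ρ = ∫₀^∞ (n¹+n²)`: away from `{x_b, x_d}`,
`(n¹)′ = −(1_{a>x_d} + ηρ)n¹` and `(n²)′ = −(1+ηρ)n²`, with the birth boundary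
conditions. -/
def IsStationaryState (η : ℝ) (x : ℝ × ℝ) (n1 n2 : ℝ → ℝ) : Prop :=
  (∀ a ∈ Ici (0:ℝ), 0 ≤ n1 a ∧ 0 ≤ n2 a) ∧
  IntegrableOn n1 (Ici 0) ∧ IntegrableOn n2 (Ici 0) ∧
  ContinuousOn n1 (Ici 0) ∧ ContinuousOn n2 (Ici 0) ∧
  (∀ a : ℝ, 0 < a → a ≠ x.1 → a ≠ x.2 →
    HasDerivAt n1
      (-((if x.2 < a then (1:ℝ) else 0)
          + η * (∫ b in Ioi (0:ℝ), (n1 b + n2 b))) * n1 a) a ∧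
    HasDerivAt n2
      (-(1 + η * (∫ b in Ioi (0:ℝ), (n1 b + n2 b))) * n2 a) a) ∧
  n1 0 = (∫ a in (0:ℝ)..(min x.1 x.2), n1 a) ∧
  n2 0 = (∫ a in Ioi (0:ℝ), if x.2 < a ∧ a ≤ x.1 then n1 a else 0) +
    ∫ a in (0:ℝ)..x.1, n2 a

/-! ### Auxiliary lemmas -/

lemma const_seg (g : ℝ → ℝ) {u v : ℝ} (hu : 0 ≤ u) (huv : u ≤ v)
    (hc : ContinuousOn g (Ici 0))
    (hd : ∀ a ∈ Ioo u v, HasDerivAt g 0 a) : g v = g u := by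
  rcases eq_or_lt_of_le huv with rfl | h
  · rfl
  obtain ⟨c, _, hc0⟩ := exists_hasDerivAt_eq_slope g (fun _ => 0) h
    (hc.mono (fun z hz => le_trans hu hz.1)) hd
  have h2 := hc0.symm
  rw [div_eq_iff (by linarith : v - u ≠ 0)] at h2
  linarith

lemma const_of_deriv (g : ℝ → ℝ) (p q : ℝ) (hc : ContinuousOn g (Ici 0))
    (hd : ∀ a, 0 < a → a ≠ p → a ≠ q → HasDerivAt g 0 a) :
    ∀ a, 0 ≤ a → g a = g 0 := by
  intro a ha
  set c₁ := max (min (min p q) a) 0 with hc₁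
  set c₂ := max (min (max p q) a) 0 with hc₂
  have h0c₁ : 0 ≤ c₁ := le_max_right _ _
  have h0c₂ : 0 ≤ c₂ := le_max_right _ _
  have hc₁₂ : c₁ ≤ c₂ := max_le_max (min_le_min (min_le_max) le_rfl) le_rfl
  have hc₂a : c₂ ≤ a := max_le (min_le_right _ _) ha
  have e1 : g c₁ = g 0 := by
    refine const_seg g le_rfl h0c₁ hc ?_
    intro z hz
    refine hd z hz.1 ?_ ?_ <;> rintro rfl
    · rcases lt_max_iff.1 hz.2 with h | h
      · rcases lt_min_iff.1 h with ⟨h', _⟩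
        rcases lt_min_iff.1 h' with ⟨h'', _⟩
        exact absurd h'' (lt_irrefl _)
      · linarith [hz.1]
    · rcases lt_max_iff.1 hz.2 with h | h
      · rcases lt_min_iff.1 h with ⟨h', _⟩
        rcases lt_min_iff.1 h' with ⟨_, h''⟩
        exact absurd h'' (lt_irrefl _)
      · linarith [hz.1]
  have e2 : g c₂ = g c₁ := by
    refine const_seg g h0c₁ hc₁₂ hc ?_
    intro z hz
    have hz0 : 0 < z := lt_of_le_of_lt h0c₁ hz.1
    refine hd z hz0 ?_ ?_ <;> rintro rfl
    · rcases lt_max_iff.1 hz.2 with h | h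
      · rcases lt_min_iff.1 h with ⟨hpm, hpa⟩
        have hpq : z < q := by
          rcases max_cases z q with ⟨he, _⟩ | ⟨he, _⟩
          · rw [he] at hpm; exact absurd hpm (lt_irrefl _)
          · rw [he] at hpm; exact hpm
        have hzc : c₁ = z := by
          rw [hc₁, min_eq_left hpq.le, min_eq_left hpa.le, max_eq_left hz0.le]
        rw [hzc] at hz
        exact absurd hz.1 (lt_irrefl _)
      · linarith
    · rcases lt_max_iff.1 hz.2 with h | h
      · rcases lt_min_iff.1 h with ⟨hqm, hqa⟩
        have hqp : z < p := by
          rcases max_cases p z with ⟨he, _⟩ | ⟨he, _⟩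
          · rw [he] at hqm; exact hqm
          · rw [he] at hqm; exact absurd hqm (lt_irrefl _)
        have hzc : c₁ = z := by
          rw [hc₁, min_eq_right hqp.le, min_eq_left hqa.le, max_eq_left hz0.le]
        rw [hzc] at hz
        exact absurd hz.1 (lt_irrefl _)
      · linarith
  have e3 : g a = g c₂ := by
    refine const_seg g h0c₂ hc₂a hc ?_
    intro z hz
    have hz0 : 0 < z := lt_of_le_of_lt h0c₂ hz.1
    refine hd z hz0 ?_ ?_ <;> rintro rfl
    · have h1 : min (max z q) a ≤ c₂ := le_max_left _ _
      have h2 : min (max z q) a < z := lt_of_le_of_lt h1 hz.1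
      rcases min_lt_iff.1 h2 with h | h
      · exact absurd (le_max_left z q) (not_le.2 h)
      · linarith [hz.2]
    · have h1 : min (max p z) a ≤ c₂ := le_max_left _ _
      have h2 : min (max p z) a < z := lt_of_le_of_lt h1 hz.1
      rcases min_lt_iff.1 h2 with h | h
      · exact absurd (le_max_right p z) (not_le.2 h)
      · linarith [hz.2]
  rw [e3, e2, e1]

lemma sol_formula (n φ ψ : ℝ → ℝ) (p q : ℝ)
    (hn : ContinuousOn n (Ici 0)) (hφc : Continuous φ) (hφ0 : φ 0 = 0)
    (hφd : ∀ a, 0 < a → a ≠ p → a ≠ q → HasDerivAt φ (ψ a) a)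
    (hd : ∀ a, 0 < a → a ≠ p → a ≠ q → HasDerivAt n (-(ψ a) * n a) a) :
    ∀ a, 0 ≤ a → n a = n 0 * Real.exp (-(φ a)) := by
  have key : ∀ a, 0 ≤ a → n a * Real.exp (φ a) = n 0 := by
    intro a ha
    have h0 := const_of_deriv (fun b => n b * Real.exp (φ b)) p q
      (hn.mul ((Real.continuous_exp.comp hφc).continuousOn)) ?_ a ha
    · simpa [hφ0] using h0
    · intro b hb hb1 hb2
      have h1 := (hd b hb hb1 hb2).mul ((hφd b hb hb1 hb2).exp)
      have h2 : -(ψ b) * n b * Real.exp (φ b) + n b * (Real.exp (φ b) * ψ b) = 0 := by ring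
      rwa [h2] at h1
  intro a ha
  rw [← key a ha, mul_assoc, ← Real.exp_add, add_neg_cancel, Real.exp_zero, mul_one]

lemma integral_exp_neg (c T : ℝ) (hc : 0 < c) :
    (∫ a in (0:ℝ)..T, Real.exp (-c*a)) = (1 - Real.exp (-c*T))/c := by
  have hder : ∀ z ∈ uIcc (0:ℝ) T,
      HasDerivAt (fun b => -Real.exp (-c*b)/c) (Real.exp (-c*z)) z := by
    intro z _
    have h1 : HasDerivAt (fun b => Real.exp (-c*b)) (-c * Real.exp (-c*z)) z := by
      simpa [mul_comm] using ((hasDerivAt_id z).const_mul (-c)).exp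
    have h2 := (h1.neg).div_const c
    refine h2.congr_deriv ?_
    rw [div_eq_iff hc.ne']; ring
  rw [intervalIntegral.integral_eq_sub_of_hasDerivAt hder
    ((Real.continuous_exp.comp (by continuity)).intervalIntegrable _ _)]
  field_simp
  simp only [mul_zero, neg_zero, neg_mul, Real.exp_zero]
  ring

lemma F_lt_one {μ T : ℝ} (hμ : 0 ≤ μ) (hT : 0 < T) :
    (∫ a in (0:ℝ)..T, Real.exp (-(1+μ)*a)) < 1 := by
  rw [integral_exp_neg _ _ (by linarith)]
  rw [div_lt_one (by linarith)]
  have := Real.exp_pos (-(1+μ)*T)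
  linarith

lemma exp_int_strict {m α β : ℝ} (hm : 0 < m) (h : α < β) :
    (∫ a in (0:ℝ)..m, Real.exp (-β*a)) < ∫ a in (0:ℝ)..m, Real.exp (-α*a) := by
  apply intervalIntegral.integral_lt_integral_of_continuousOn_of_le_of_exists_lt hm
  · exact (Real.continuous_exp.comp (by continuity)).continuousOn
  · exact (Real.continuous_exp.comp (by continuity)).continuousOn
  · intro z hz
    exact Real.exp_le_exp.2 (by nlinarith [hz.1])
  · exact ⟨m, ⟨hm.le, le_rfl⟩, Real.exp_lt_exp.2 (by nlinarith)⟩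

lemma malthus_unique {m lam μ : ℝ} (hm : 0 < m)
    (h1 : (∫ a in (0:ℝ)..m, Real.exp (-lam*a)) = 1)
    (h2 : (∫ a in (0:ℝ)..m, Real.exp (-μ*a)) = 1) : μ = lam := by
  rcases lt_trichotomy μ lam with h | h | h
  · have := exp_int_strict hm h; rw [h1, h2] at this; exact absurd this (lt_irrefl _)
  · exact h
  · have := exp_int_strict hm h; rw [h1, h2] at this; exact absurd this (lt_irrefl _)

/-- There is exactly one nontrivial stationary state: it exists, and any nontrivial
stationary state `(n¹,n²)` satisfies `ηρ = λ(x)` and equals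
`(λ(x)/(η‖N_x‖₁)) • N_x` on `[0,∞)`. -/
theorem stationary_state_unique (lam : ℝ × ℝ → ℝ) (hlam : IsMalthusian lam)
    (η : ℝ) (hη : 0 < η) (x : ℝ × ℝ) (hx : x ∈ viable) :
    (∃ n1 n2 : ℝ → ℝ, IsStationaryState η x n1 n2 ∧
      ¬ (∀ a ∈ Ici (0:ℝ), n1 a = 0 ∧ n2 a = 0)) ∧
    (∀ n1 n2 : ℝ → ℝ, IsStationaryState η x n1 n2 →
      ¬ (∀ a ∈ Ici (0:ℝ), n1 a = 0 ∧ n2 a = 0) →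
      η * (∫ b in Ioi (0:ℝ), (n1 b + n2 b)) = lam x ∧
      ∀ a ∈ Ici (0:ℝ),
        n1 a = (lam x / (η * normN lam x)) * N1 lam x a ∧
        n2 a = (lam x / (η * normN lam x)) * N2 lam x a) := by
  obtain ⟨hlpos, hint⟩ := hlam x hx
  have hm1 : (1:ℝ) < min x.1 x.2 := hx
  have hm0 : (0:ℝ) < min x.1 x.2 := by linarith
  have hx1 : (0:ℝ) < x.1 := lt_of_lt_of_le hm0 (min_le_left _ _)
  have hx2 : (0:ℝ) < x.2 := lt_of_lt_of_le hm0 (min_le_right _ _)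
  have hN1pos : ∀ a, 0 < N1 lam x a := fun a => Real.exp_pos _
  have hN1cont : Continuous (N1 lam x) := by
    apply Real.continuous_exp.comp
    exact ((continuous_const.mul continuous_id).add
      ((continuous_id.sub continuous_const).max continuous_const)).neg
  have hN1int : IntegrableOn (N1 lam x) (Ioi 0) := by
    apply (exp_neg_integrableOn_Ioi 0 hlpos).mono' hN1cont.aestronglyMeasurable.restrict
    refine ae_of_all _ (fun a => ?_)
    rw [Real.norm_eq_abs, abs_of_pos (hN1pos a)]
    exact Real.exp_le_exp.2 (by nlinarith [le_max_right (a - x.2) (0:ℝ)])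
  have hN1Ici : IntegrableOn (N1 lam x) (Ici 0) := (integrableOn_Ici_iff_integrableOn_Ioi).2 hN1int
  have h1l : (0:ℝ) < 1 + lam x := by linarith
  have hF21nn : 0 ≤ F21 lam x := by
    apply setIntegral_nonneg measurableSet_Ioi
    intro a _; split_ifs
    · exact (Real.exp_pos _).le
    · exact le_rfl
  have hF22lt : F22 lam x < 1 := F_lt_one hlpos.le hx1
  have h1F22 : 0 < 1 - F22 lam x := by linarith
  have hknn : 0 ≤ F21 lam x / (1 - F22 lam x) := div_nonneg hF21nn h1F22.le
  have hN2nn : ∀ a, 0 ≤ N2 lam x a := fun a => mul_nonneg hknn (Real.exp_pos _).le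
  have hN2cont : Continuous (N2 lam x) :=
    continuous_const.mul (Real.continuous_exp.comp (continuous_const.mul continuous_id))
  have hN2int : IntegrableOn (N2 lam x) (Ioi 0) := (exp_neg_integrableOn_Ioi 0 h1l).const_mul _
  have hN2Ici : IntegrableOn (N2 lam x) (Ici 0) := (integrableOn_Ici_iff_integrableOn_Ioi).2 hN2int
  have hintN1m : (∫ a in (0:ℝ)..(min x.1 x.2), N1 lam x a) = 1 := by
    rw [intervalIntegral.integral_congr (g := fun a => Real.exp (-(lam x)*a)) ?_]
    · exact hint
    · intro a ha
      rw [uIcc_of_le hm0.le] at ha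
      have hax2 : a ≤ x.2 := le_trans ha.2 (min_le_right _ _)
      show Real.exp (-(lam x * a + max (a - x.2) 0)) = Real.exp (-(lam x) * a)
      rw [max_eq_right (by linarith), add_zero, neg_mul]
  have hnormeq : normN lam x
      = (∫ a in Ioi (0:ℝ), N1 lam x a) + ∫ a in Ioi (0:ℝ), N2 lam x a :=
    integral_add hN1int hN2int
  have hN1big : (1:ℝ) ≤ ∫ a in Ioi (0:ℝ), N1 lam x a := by
    rw [← hintN1m, intervalIntegral.integral_of_le hm0.le]
    exact setIntegral_mono_set hN1int (ae_of_all _ fun a => (hN1pos a).le)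
      (Ioc_subset_Ioi_self).eventuallyLE
  have hN2Inn : (0:ℝ) ≤ ∫ a in Ioi (0:ℝ), N2 lam x a :=
    setIntegral_nonneg measurableSet_Ioi (fun a _ => hN2nn a)
  have hnorm : 0 < normN lam x := by rw [hnormeq]; linarith
  constructor
  · -- existence
    set c := lam x / (η * normN lam x) with hcdef
    have hcpos : 0 < c := div_pos hlpos (mul_pos hη hnorm)
    have hρ : (∫ b in Ioi (0:ℝ), (c * N1 lam x b + c * N2 lam x b))
        = c * normN lam x := by
      rw [show normN lam x = ∫ a in Ioi (0:ℝ), (N1 lam x a + N2 lam x a) from rfl,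
        ← MeasureTheory.integral_const_mul]
      congr 1; funext b; ring
    have hηρ : η * (∫ b in Ioi (0:ℝ), (c * N1 lam x b + c * N2 lam x b)) = lam x := by
      rw [hρ, hcdef]
      field_simp
    have hN10 : N1 lam x 0 = 1 := by
      have hmx : max ((0:ℝ) - x.2) 0 = 0 := max_eq_right (by linarith)
      simp only [N1, mul_zero]
      rw [hmx]
      norm_num
    refine ⟨fun a => c * N1 lam x a, fun a => c * N2 lam x a,
      ⟨?_, ?_, ?_, ?_, ?_, ?_, ?_, ?_⟩, ?_⟩
    · exact fun a _ => ⟨mul_nonneg hcpos.le (hN1pos a).le, mul_nonneg hcpos.le (hN2nn a)⟩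
    · exact hN1Ici.const_mul c
    · exact hN2Ici.const_mul c
    · exact (continuous_const.mul hN1cont).continuousOn
    · exact (continuous_const.mul hN2cont).continuousOn
    · intro a ha h1 h2
      constructor
      · rcases lt_or_gt_of_ne h2 with hlt | hgt
        · have hev : (fun b => c * N1 lam x b) =ᶠ[nhds a]
              (fun b => c * Real.exp (-(lam x) * b)) := by
            filter_upwards [Iio_mem_nhds hlt] with b hb
            have hb' : b < x.2 := hb
            show c * N1 lam x b = c * Real.exp (-(lam x) * b)
            rw [show N1 lam x b = Real.exp (-(lam x) * b) from by
              simp only [N1]; rw [max_eq_right (by linarith), add_zero, neg_mul]]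
          have hd1 : HasDerivAt (fun b => Real.exp (-(lam x) * b))
              (-(lam x) * Real.exp (-(lam x) * a)) a := by
            simpa [mul_comm] using ((hasDerivAt_id a).const_mul (-(lam x))).exp
          have hd3 := (hd1.const_mul c).congr_of_eventuallyEq hev
          refine hd3.congr_deriv ?_
          beta_reduce
          rw [if_neg (not_lt.2 hlt.le), hηρ,
            show N1 lam x a = Real.exp (-(lam x) * a) from by
              simp only [N1]; rw [max_eq_right (by linarith), add_zero, neg_mul]]
          ring
        · have hev : (fun b => c * N1 lam x b) =ᶠ[nhds a]
              (fun b => c * Real.exp (-(lam x * b + (b - x.2)))) := by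
            filter_upwards [Ioi_mem_nhds hgt] with b hb
            have hb' : x.2 < b := hb
            show c * N1 lam x b = c * Real.exp (-(lam x * b + (b - x.2)))
            rw [show N1 lam x b = Real.exp (-(lam x * b + (b - x.2))) from by
              simp only [N1]; rw [max_eq_left (by linarith : (0:ℝ) ≤ b - x.2)]]
          have hd1 : HasDerivAt (fun b => -(lam x * b + (b - x.2))) (-(lam x + 1)) a := by
            have h := (((hasDerivAt_id a).const_mul (lam x)).add
              ((hasDerivAt_id a).sub_const x.2)).neg
            exact h.congr_deriv (by ring)
          have hd3 := ((hd1.exp).const_mul c).congr_of_eventuallyEq hev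
          refine hd3.congr_deriv ?_
          beta_reduce
          rw [if_pos hgt, hηρ,
            show N1 lam x a = Real.exp (-(lam x * a + (a - x.2))) from by
              simp only [N1]; rw [max_eq_left (by linarith : (0:ℝ) ≤ a - x.2)]]
          ring
      · have hd1 : HasDerivAt (fun b => -(1 + lam x) * b) (-(1 + lam x)) a := by
          simpa using (hasDerivAt_id a).const_mul (-(1 + lam x))
        have hd2 := ((hd1.exp.const_mul (F21 lam x / (1 - F22 lam x))).const_mul c)
        have hev : (fun b => c * N2 lam x b) =ᶠ[nhds a]
            (fun b => c * (F21 lam x / (1 - F22 lam x) * Real.exp (-(1 + lam x) * b))) :=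
          Filter.Eventually.of_forall (fun b => by simp only [N2])
        have hd3 := hd2.congr_of_eventuallyEq hev
        refine hd3.congr_deriv ?_
        beta_reduce
        rw [hηρ]
        simp only [N2]
        ring
    · show c * N1 lam x 0 = ∫ a in (0:ℝ)..(min x.1 x.2), c * N1 lam x a
      rw [intervalIntegral.integral_const_mul, hintN1m, hN10, mul_one]
    · show c * N2 lam x 0
        = (∫ a in Ioi (0:ℝ), if x.2 < a ∧ a ≤ x.1 then c * N1 lam x a else 0)
          + ∫ a in (0:ℝ)..x.1, c * N2 lam x a
      have ht1 : (∫ a in Ioi (0:ℝ), if x.2 < a ∧ a ≤ x.1 then c * N1 lam x a else 0)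
          = c * F21 lam x := by
        rw [F21, ← MeasureTheory.integral_const_mul]
        congr 1; funext a
        rw [mul_ite, mul_zero]
        by_cases hcnd : x.2 < a ∧ a ≤ x.1
        · rw [if_pos hcnd, if_pos hcnd]
          congr 1
          simp only [N1]; congr 1; ring
        · rw [if_neg hcnd, if_neg hcnd]
      have ht2 : (∫ a in (0:ℝ)..x.1, c * N2 lam x a)
          = c * (F21 lam x / (1 - F22 lam x) * F22 lam x) := by
        simp only [N2, ← mul_assoc]
        rw [intervalIntegral.integral_const_mul, F22, mul_assoc]
      rw [ht1, ht2]
      simp only [N2]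
      field_simp
      simp only [mul_zero, Real.exp_zero]
      ring_nf
      rw [Real.exp_zero, mul_one]
    · intro h
      have h0 := (h 0 self_mem_Ici).1
      simp only [hN10, mul_one] at h0
      exact hcpos.ne' h0
  · -- uniqueness
    intro n1 n2 hst hnt
    obtain ⟨hnn, hi1, hi2, hcn1, hcn2, hode, hb1, hb2⟩ := hst
    set ρ := ∫ b in Ioi (0:ℝ), (n1 b + n2 b) with hρdef
    set μ := η * ρ with hμdef
    have hρnn : 0 ≤ ρ := by
      rw [hρdef]
      exact setIntegral_nonneg measurableSet_Ioi
        (fun b hb => add_nonneg (hnn b (le_of_lt (mem_Ioi.1 hb))).1 (hnn b (le_of_lt (mem_Ioi.1 hb))).2)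
    have hμnn : 0 ≤ μ := by rw [hμdef]; exact mul_nonneg hη.le hρnn
    have formula1 : ∀ a, 0 ≤ a → n1 a = n1 0 * Real.exp (-(μ * a + max (a - x.2) 0)) := by
      apply sol_formula n1 (fun a => μ * a + max (a - x.2) 0)
        (fun a => (if x.2 < a then (1:ℝ) else 0) + μ) x.1 x.2 hcn1
      · exact (continuous_const.mul continuous_id).add
          ((continuous_id.sub continuous_const).max continuous_const)
      · show μ * 0 + max ((0:ℝ) - x.2) 0 = 0
        rw [max_eq_right (by linarith : (0:ℝ) - x.2 ≤ 0), mul_zero, add_zero]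
      · intro a ha h1 h2
        rcases lt_or_gt_of_ne h2 with hlt | hgt
        · have hev : (fun b => μ * b + max (b - x.2) 0) =ᶠ[nhds a] (fun b => μ * b) := by
            filter_upwards [Iio_mem_nhds hlt] with b hb
            have hb' : b < x.2 := hb
            rw [max_eq_right (by linarith), add_zero]
          have hd1 : HasDerivAt (fun b => μ * b) μ a := by
            simpa using (hasDerivAt_id a).const_mul μ
          have hd2 := hd1.congr_of_eventuallyEq hev
          refine hd2.congr_deriv ?_
          rw [if_neg (not_lt.2 hlt.le), zero_add]
        · have hev : (fun b => μ * b + max (b - x.2) 0) =ᶠ[nhds a]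
              (fun b => μ * b + (b - x.2)) := by
            filter_upwards [Ioi_mem_nhds hgt] with b hb
            have hb' : x.2 < b := hb
            rw [max_eq_left (by linarith : (0:ℝ) ≤ b - x.2)]
          have hd1 : HasDerivAt (fun b => μ * b + (b - x.2)) (μ + 1) a := by
            exact (((hasDerivAt_id a).const_mul μ).add ((hasDerivAt_id a).sub_const x.2)).congr_deriv (by ring)
          have hd2 := hd1.congr_of_eventuallyEq hev
          refine hd2.congr_deriv ?_
          rw [if_pos hgt]
          ring
      · intro a ha h1 h2
        exact (hode a ha h1 h2).1
    have formula2 : ∀ a, 0 ≤ a → n2 a = n2 0 * Real.exp (-((1 + μ) * a)) := by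
      apply sol_formula n2 (fun a => (1 + μ) * a) (fun _ => 1 + μ) x.1 x.2 hcn2
      · exact continuous_const.mul continuous_id
      · simp
      · intro a ha h1 h2
        simpa using (hasDerivAt_id a).const_mul (1 + μ)
      · intro a ha h1 h2
        exact (hode a ha h1 h2).2
    have hb1' : n1 0 = n1 0 * ∫ a in (0:ℝ)..(min x.1 x.2), Real.exp (-μ * a) := by
      conv_lhs => rw [hb1]
      rw [← intervalIntegral.integral_const_mul]
      apply intervalIntegral.integral_congr
      intro a ha
      rw [uIcc_of_le hm0.le] at ha
      have hax2 : a ≤ x.2 := le_trans ha.2 (min_le_right _ _)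
      show n1 a = n1 0 * Real.exp (-μ * a)
      rw [formula1 a ha.1, max_eq_right (by linarith : a - x.2 ≤ 0), add_zero, neg_mul]
    by_cases hz : n1 0 = 0
    · exfalso
      have hn1z : ∀ a ∈ Ici (0:ℝ), n1 a = 0 := fun a ha => by
        rw [formula1 a ha, hz, zero_mul]
      have ht1 : (∫ a in Ioi (0:ℝ), if x.2 < a ∧ a ≤ x.1 then n1 a else 0) = 0 := by
        rw [setIntegral_congr_fun measurableSet_Ioi (g := fun _ => (0:ℝ)) ?_]
        · simp
        · intro a ha
          show (if x.2 < a ∧ a ≤ x.1 then n1 a else 0) = 0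
          by_cases hcnd : x.2 < a ∧ a ≤ x.1
          · rw [if_pos hcnd]
            exact hn1z a (le_of_lt (mem_Ioi.1 ha))
          · rw [if_neg hcnd]
      have hb2' : n2 0 = n2 0 * ∫ a in (0:ℝ)..x.1, Real.exp (-(1+μ)*a) := by
        conv_lhs => rw [hb2]
        rw [ht1, zero_add, ← intervalIntegral.integral_const_mul]
        apply intervalIntegral.integral_congr
        intro a ha
        rw [uIcc_of_le hx1.le] at ha
        show n2 a = n2 0 * Real.exp (-(1+μ) * a)
        rw [formula2 a ha.1, neg_mul]
      have hF := F_lt_one hμnn hx1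
      have h2z : n2 0 = 0 := by
        by_contra hh
        have hp : 0 < n2 0 := lt_of_le_of_ne (hnn 0 self_mem_Ici).2 (Ne.symm hh)
        nlinarith
      exact hnt (fun a ha => ⟨hn1z a ha, by rw [formula2 a ha, h2z, zero_mul]⟩)
    · have hI : (∫ a in (0:ℝ)..(min x.1 x.2), Real.exp (-μ * a)) = 1 := by
        have h2 : n1 0 * 1 = n1 0 * ∫ a in (0:ℝ)..(min x.1 x.2), Real.exp (-μ * a) := by
          rw [mul_one]; exact hb1'
        exact (mul_left_cancel₀ hz h2).symm
      have hml : μ = lam x := malthus_unique hm0 hint hI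
      have hfN1 : ∀ a, 0 ≤ a → n1 a = n1 0 * N1 lam x a := by
        intro a ha
        rw [formula1 a ha, hml]
        rfl
      have hfN2' : ∀ a, 0 ≤ a → n2 a = n2 0 * Real.exp (-(1 + lam x) * a) := by
        intro a ha
        rw [formula2 a ha, hml, neg_mul]
      have ht1 : (∫ a in Ioi (0:ℝ), if x.2 < a ∧ a ≤ x.1 then n1 a else 0)
          = n1 0 * F21 lam x := by
        rw [F21, ← MeasureTheory.integral_const_mul]
        apply setIntegral_congr_fun measurableSet_Ioi
        intro a ha
        show (if x.2 < a ∧ a ≤ x.1 then n1 a else 0)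
          = n1 0 * (if x.2 < a ∧ a ≤ x.1 then Real.exp (-(lam x) * a - max (a - x.2) 0) else 0)
        rw [mul_ite, mul_zero]
        by_cases hcnd : x.2 < a ∧ a ≤ x.1
        · rw [if_pos hcnd, if_pos hcnd, hfN1 a (le_of_lt ha)]
          congr 1
          simp only [N1]
          congr 1
          ring
        · rw [if_neg hcnd, if_neg hcnd]
      have ht2 : (∫ a in (0:ℝ)..x.1, n2 a) = n2 0 * F22 lam x := by
        rw [F22, ← intervalIntegral.integral_const_mul]
        apply intervalIntegral.integral_congr
        intro a ha
        rw [uIcc_of_le hx1.le] at ha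
        show n2 a = n2 0 * Real.exp (-(1 + lam x) * a)
        exact hfN2' a ha.1
      rw [ht1, ht2] at hb2
      have hn20 : n2 0 = n1 0 * (F21 lam x / (1 - F22 lam x)) := by
        field_simp
        linarith
      have hfN2 : ∀ a, 0 ≤ a → n2 a = n1 0 * N2 lam x a := by
        intro a ha
        rw [hfN2' a ha, hn20]
        simp only [N2]
        ring
      have hρval : ρ = n1 0 * normN lam x := by
        rw [hρdef, show normN lam x = ∫ a in Ioi (0:ℝ), (N1 lam x a + N2 lam x a) from rfl,
          ← MeasureTheory.integral_const_mul]
        apply setIntegral_congr_fun measurableSet_Ioi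
        intro b hb
        show n1 b + n2 b = n1 0 * (N1 lam x b + N2 lam x b)
        rw [hfN1 b (le_of_lt hb), hfN2 b (le_of_lt hb), mul_add]
      have heq : η * (n1 0 * normN lam x) = lam x := by
        rw [← hρval, ← hμdef]
        exact hml
      have hcoef : n1 0 = lam x / (η * normN lam x) := by
        rw [← heq]
        field_simp
      refine ⟨hml, ?_⟩
      intro a ha
      exact ⟨by rw [hfN1 a ha, hcoef], by rw [hfN2 a ha, hcoef]⟩
end
end
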